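/- arXiv:1405.0605 — 5 statements merged into one kernel-verified Lean document; each statement's English description precedes it below -/
import Mathlib

section
/- Let R be a positive random variable such that the distribution function of e^R is in the Gumbel max-domain of attraction with positive scaling function e(·), and assume lim_{u→∞} e(u)·log(u)/u = c₀ for some constant c₀ ∈ [0,∞). Then for any c > 1 and any c' > c₀: limsup_{u→∞} u^{log(c)/c'} · P(R > log(c·u))/P(R > log u) ≤ 1. -/
open MeasureTheory ProbabilityTheory Filter Real

/-- If the distribution function of `e^R` is in the Gumbel max-domain of
attraction with scaling function `e(·)` and `e(u) log u / u → c₀ ∈ [0,∞)`, then for any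
`c > 1` and `c' > c₀`, `limsup_{u→∞} u^{log c / c'} P(R > log(cu))/P(R > log u) ≤ 1`. -/
theorem tail_ratio_bound
    {Ω : Type*} [MeasureSpace Ω] [IsProbabilityMeasure (ℙ : Measure Ω)]
    (R : Ω → ℝ) (hRmeas : Measurable R) (hRpos : ∀ ω, 0 < R ω)
    (hRtail : ∀ u : ℝ, 0 < ℙ {ω | u < Real.exp (R ω)})
    (e : ℝ → ℝ) (hepos : ∀ u : ℝ, 0 < e u)
    (hGumbel : ∀ x : ℝ, Tendsto
      (fun u => (ℙ {ω | u + x * e u < Real.exp (R ω)}).toReal /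
        (ℙ {ω | u < Real.exp (R ω)}).toReal) atTop (nhds (Real.exp (-x))))
    (c₀ : ℝ) (hc₀ : 0 ≤ c₀)
    (he : Tendsto (fun u => e u * Real.log u / u) atTop (nhds c₀))
    (c c' : ℝ) (hc : 1 < c) (hc' : c₀ < c') :
    Filter.limsup (fun u => u ^ (Real.log c / c') *
      ((ℙ {ω | Real.log (c * u) < R ω}).toReal / (ℙ {ω | Real.log u < R ω}).toReal))
      atTop ≤ 1 := by
  set h : ℝ → ℝ := fun u => (ℙ {ω | u < Real.exp (R ω)}).toReal with hh
  have hpos : ∀ u, 0 < h u := fun u =>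
    ENNReal.toReal_pos (hRtail u).ne' (measure_ne_top _ _)
  have hanti : ∀ ⦃u v : ℝ⦄, u ≤ v → h v ≤ h u := by
    intro u v huv
    exact ENNReal.toReal_mono (measure_ne_top _ _)
      (measure_mono fun ω hω => lt_of_le_of_lt huv hω)
  have hc'pos : 0 < c' := lt_of_le_of_lt hc₀ hc'
  obtain ⟨c'', hc''def⟩ : ∃ x : ℝ, x = (c₀ + c') / 2 := ⟨_, rfl⟩
  have hc''pos : 0 < c'' := by rw [hc''def]; linarith
  have hc''lt : c'' < c' := by rw [hc''def]; linarith
  have hc₀lt : c₀ < c'' := by rw [hc''def]; linarith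
  obtain ⟨s, hsdef⟩ : ∃ x : ℝ, x = (c' + c'') / (2 * c') := ⟨_, rfl⟩
  have hspos : 0 < s := by rw [hsdef]; positivity
  have hslt1 : s < 1 := by
    rw [hsdef, div_lt_one (by linarith)]; linarith
  obtain ⟨q, hqdef⟩ : ∃ x : ℝ, x = Real.exp (-s) := ⟨_, rfl⟩
  have hqpos : 0 < q := by rw [hqdef]; exact Real.exp_pos _
  have hq1 : q < 1 := by
    rw [hqdef, Real.exp_lt_one_iff]; linarith
  have hlogc : 0 < Real.log c := Real.log_pos hc
  -- eventual per-step decay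
  have hA : ∀ᶠ u in atTop, h (u + e u) ≤ q * h u := by
    have hG := hGumbel 1
    simp only [one_mul] at hG
    have hlt : Real.exp (-1) < q := by
      rw [hqdef, Real.exp_lt_exp]; linarith
    filter_upwards [hG.eventually_le_const hlt] with u hu
    exact (div_le_iff₀ (hpos u)).mp hu
  -- eventual bound on e
  have hB : ∀ᶠ u in atTop, e u * Real.log u ≤ c'' * u := by
    filter_upwards [he.eventually_le_const hc₀lt, eventually_gt_atTop (0 : ℝ)]
      with u h1 h2
    have := (div_le_iff₀ h2).mp h1
    linarith
  obtain ⟨U, hU⟩ := eventually_atTop.mp ((hA.and hB).and (eventually_ge_atTop (2 : ℝ)))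
  obtain ⟨β, hβdef⟩ : ∃ x : ℝ, x = (c' - c'') * Real.log c / (2 * c' * c'') := ⟨_, rfl⟩
  have hβpos : 0 < β := by
    rw [hβdef]
    have : 0 < c' - c'' := by linarith
    positivity
  -- main eventual bound
  have hmain : ∀ᶠ u in atTop,
      u ^ (Real.log c / c') *
        ((ℙ {ω | Real.log (c * u) < R ω}).toReal /
          (ℙ {ω | Real.log u < R ω}).toReal) ≤ 1 := by
    filter_upwards [eventually_ge_atTop U, eventually_ge_atTop (2 : ℝ),
      eventually_ge_atTop (Real.exp (s / β))] with u huU hu2 huβ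
    have hupos : (0 : ℝ) < u := by linarith
    have hlogu : 0 < Real.log u := Real.log_pos (by linarith)
    -- rewrite sets
    have hset1 : {ω | Real.log u < R ω} = {ω | u < Real.exp (R ω)} := by
      ext ω; exact Real.log_lt_iff_lt_exp hupos
    have hset2 : {ω | Real.log (c * u) < R ω} = {ω | c * u < Real.exp (R ω)} := by
      ext ω; exact Real.log_lt_iff_lt_exp (by positivity)
    rw [hset1, hset2]
    obtain ⟨t, htdef⟩ : ∃ x : ℝ, x = c'' / Real.log u := ⟨_, rfl⟩
    have htpos : 0 < t := by rw [htdef]; positivity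
    set f : ℝ → ℝ := fun v => v + e v with hfdef
    have key : ∀ k : ℕ, u ≤ f^[k] u ∧ h (f^[k] u) ≤ q ^ k * h u ∧
        f^[k] u ≤ u * (1 + t) ^ k := by
      intro k
      induction k with
      | zero => simp
      | succ k ih =>
        obtain ⟨ih1, ih2, ih3⟩ := ih
        set v : ℝ := f^[k] u with hvdef
        have hstep : f^[k + 1] u = v + e v := by
          rw [Function.iterate_succ_apply']
        clear_value v
        have hvU : U ≤ v := le_trans huU ih1
        obtain ⟨⟨hv1, hv2⟩, hv2'⟩ := hU v hvU
        have hvpos : 0 < v := by linarith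
        have hlogv : 0 < Real.log v := Real.log_pos (by linarith)
        have hloguv : Real.log u ≤ Real.log v := Real.log_le_log hupos ih1
        have hev : e v ≤ t * v := by
          rw [htdef, div_mul_eq_mul_div, le_div_iff₀ hlogu]
          nlinarith [hepos v]
        refine ⟨?_, ?_, ?_⟩
        · rw [hstep]; have := (hepos v); linarith
        · rw [hstep, pow_succ, mul_comm (q ^ k) q, mul_assoc]
          calc h (v + e v) ≤ q * h v := hv1
            _ ≤ q * (q ^ k * h u) := by
                exact mul_le_mul_of_nonneg_left ih2 hqpos.le
        · rw [hstep, pow_succ, ← mul_assoc]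
          have h1t : (0 : ℝ) ≤ 1 + t := by linarith
          have e1 : v + e v ≤ v * (1 + t) := by
            have hexp : v * (1 + t) = v + t * v := by ring
            linarith
          have e2 : v * (1 + t) ≤ u * (1 + t) ^ k * (1 + t) :=
            mul_le_mul_of_nonneg_right ih3 h1t
          linarith
    set n : ℕ := ⌊Real.log c * Real.log u / c''⌋₊ with hndef
    obtain ⟨k1, k2, k3⟩ := key n
    have hnle : (n : ℝ) ≤ Real.log c * Real.log u / c'' :=
      Nat.floor_le (by positivity)
    have hngt : Real.log c * Real.log u / c'' - 1 < (n : ℝ) :=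
      Nat.sub_one_lt_floor _
    clear_value n
    -- f^[n] u ≤ c * u
    have hfn : f^[n] u ≤ c * u := by
      have hnt : (n : ℝ) * t ≤ Real.log c := by
        rw [htdef]
        calc (n : ℝ) * (c'' / Real.log u)
            ≤ Real.log c * Real.log u / c'' * (c'' / Real.log u) := by
              exact mul_le_mul_of_nonneg_right hnle (by positivity)
          _ = Real.log c := by field_simp
      have hpow : (1 + t) ^ n ≤ c := by
        calc (1 + t) ^ n ≤ Real.exp t ^ n := by
              exact pow_le_pow_left₀ (by linarith) (by linarith [Real.add_one_le_exp t]) n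
          _ = Real.exp ((n : ℝ) * t) := by rw [← Real.exp_nat_mul]
          _ ≤ Real.exp (Real.log c) := Real.exp_le_exp.mpr hnt
          _ = c := Real.exp_log (by linarith)
      calc f^[n] u ≤ u * (1 + t) ^ n := k3
        _ ≤ u * c := mul_le_mul_of_nonneg_left hpow hupos.le
        _ = c * u := mul_comm u c
    have hcu : h (c * u) ≤ q ^ n * h u := le_trans (hanti hfn) k2
    have hdiv : h (c * u) / h u ≤ q ^ n := (div_le_iff₀ (hpos u)).mpr hcu
    have hrpow : u ^ (Real.log c / c') = Real.exp (Real.log c / c' * Real.log u) := by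
      rw [Real.rpow_def_of_pos hupos, mul_comm]
    have hqn : q ^ n = Real.exp ((n : ℝ) * (-s)) := by
      rw [hqdef, ← Real.exp_nat_mul]
    have hfinal : u ^ (Real.log c / c') * q ^ n ≤ 1 := by
      rw [hrpow, hqn, ← Real.exp_add, Real.exp_le_one_iff]
      have hβu : s ≤ β * Real.log u := by
        have : s / β ≤ Real.log u := by
          rw [← Real.log_exp (s / β)]
          exact Real.log_le_log (Real.exp_pos _) huβ
        calc s = β * (s / β) := by field_simp
          _ ≤ β * Real.log u := mul_le_mul_of_nonneg_left this hβpos.le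
      have hkey : s * (Real.log c * Real.log u / c'') - Real.log c / c' * Real.log u
          = β * Real.log u := by
        rw [hsdef, hβdef]
        field_simp
        ring
      have hsn : s * (Real.log c * Real.log u / c'' - 1) ≤ s * (n : ℝ) :=
        mul_le_mul_of_nonneg_left hngt.le hspos.le
      have hsn' : s * (Real.log c * Real.log u / c'' - 1)
          = s * (Real.log c * Real.log u / c'') - s := by ring
      linarith only [hβu, hkey, hsn, hsn', hspos]
    calc u ^ (Real.log c / c') * (h (c * u) / h u)
        ≤ u ^ (Real.log c / c') * q ^ n :=
          mul_le_mul_of_nonneg_left hdiv (Real.rpow_nonneg hupos.le _)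
      _ ≤ 1 := hfinal
  refine limsup_le_of_le (isCoboundedUnder_le_of_eventually_le atTop (x := 0) ?_) hmain
  filter_upwards [eventually_ge_atTop (0 : ℝ)] with u hu
  exact mul_nonneg (Real.rpow_nonneg hu _)
    (div_nonneg ENNReal.toReal_nonneg ENNReal.toReal_nonneg)
end

section
/- Let R be a positive random variable such that the distribution function of e^R is in the Gumbel max-domain of attraction with positive scaling function e(·), and assume e(·) is O-regularly varying, i.e. for every λ > 1, 0 < liminf_{u→∞} e(λu)/e(u) ≤ limsup_{u→∞} e(λu)/e(u) < ∞. Then there exist positive constants α, M, u₀ and ε ∈ (0,1) such that for every c > 0, every x ∈ (0, c·u/e(u)) and every u > u₀: P(R > log(u + x·e(u)))/P(R > log u) ≤ (1+ε)·exp(−(1−ε)·M·(1+c)^{−α}·x). -/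
open MeasureTheory ProbabilityTheory Filter Real Set
open scoped ENNReal

/-- Steinhaus-type uniformity: if a measurable function has, for each lag `t ∈ (0,2]`,
eventually bounded increments at lag `t`, then increments at lags in `[0,1]` are
uniformly eventually bounded. -/
lemma aux_steinhaus (h : ℝ → ℝ) (hm : Measurable h)
    (hpt : ∀ t : ℝ, 0 < t → t ≤ 8 → ∃ K : ℝ, ∃ X : ℝ, ∀ x ≥ X, |h (x + t) - h x| ≤ K) :
    ∃ K : ℝ, ∃ X : ℝ, ∀ x ≥ X, ∀ s ∈ Set.Icc (0:ℝ) 1, h (x + s) - h x ≤ K := by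
  by_contra hcon
  push_neg at hcon
  -- hcon : ∀ K X, ∃ x ≥ X, ∃ s ∈ Icc 0 1, K < h (x + s) - h x
  have hsel : ∀ n : ℕ, ∃ x : ℝ, (n:ℝ) ≤ x ∧ ∃ s ∈ Set.Icc (0:ℝ) 1, (n:ℝ) < h (x + s) - h x := by
    intro n
    obtain ⟨x, hx, s, hs, hgt⟩ := hcon (n:ℝ) (n:ℝ)
    exact ⟨x, hx, s, hs, hgt⟩
  choose x hxge s hs hgt using hsel
  set E : ℕ → Set ℝ := fun k => Icc (0:ℝ) 8 ∩
    ⋂ (n : ℕ) (_ : k ≤ n), {t | |h (x n + t) - h (x n)| ≤ (k:ℝ) ∧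
      |h (x n + s n + t) - h (x n + s n)| ≤ (k:ℝ)} with hE
  have hEmeas : ∀ k, MeasurableSet (E k) := by
    intro k
    refine measurableSet_Icc.inter (MeasurableSet.iInter fun n => MeasurableSet.iInter fun _ => ?_)
    refine MeasurableSet.inter ?_ ?_
    · exact measurableSet_le ((hm.comp (measurable_const_add (x n))).sub measurable_const).abs
        measurable_const
    · exact measurableSet_le ((hm.comp (measurable_const_add (x n + s n))).sub
        measurable_const).abs measurable_const
  have hEmono : Monotone E := by
    intro k k' hkk' t ht
    refine ⟨ht.1, ?_⟩
    simp only [Set.mem_iInter] at *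
    intro n hn
    have := ht.2
    simp only [Set.mem_iInter, Set.mem_setOf_eq] at this
    obtain ⟨h1, h2⟩ := this n (le_trans hkk' hn)
    exact ⟨h1.trans (by exact_mod_cast Nat.cast_le.2 hkk'), h2.trans (by exact_mod_cast Nat.cast_le.2 hkk')⟩
  have hcover : Icc (0:ℝ) 8 ⊆ ⋃ k, E k := by
    intro t ht
    rcases eq_or_lt_of_le ht.1 with h0 | h0
    · refine Set.mem_iUnion.2 ⟨0, ht, ?_⟩
      simp only [Set.mem_iInter, Set.mem_setOf_eq]
      intro n _
      rw [← h0]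
      simp
    · obtain ⟨K, X, hKX⟩ := hpt t h0 ht.2
      refine Set.mem_iUnion.2 ⟨max ⌈K⌉₊ ⌈X⌉₊, ht, ?_⟩
      simp only [Set.mem_iInter, Set.mem_setOf_eq]
      intro n hn
      have hnK : K ≤ ((max ⌈K⌉₊ ⌈X⌉₊ : ℕ) : ℝ) := by
        calc K ≤ (⌈K⌉₊ : ℝ) := Nat.le_ceil K
        _ ≤ _ := by exact_mod_cast Nat.cast_le.2 (le_max_left _ _)
      have hnX : X ≤ x n := by
        calc X ≤ (⌈X⌉₊ : ℝ) := Nat.le_ceil X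
        _ ≤ ((max ⌈K⌉₊ ⌈X⌉₊ : ℕ) : ℝ) := by exact_mod_cast Nat.cast_le.2 (le_max_right _ _)
        _ ≤ (n : ℝ) := by exact_mod_cast Nat.cast_le.2 hn
        _ ≤ x n := hxge n
      have hnX' : X ≤ x n + s n := le_trans hnX (le_add_of_nonneg_right (hs n).1)
      exact ⟨(hKX (x n) hnX).trans hnK, (hKX (x n + s n) hnX').trans hnK⟩
  -- measure of E k tends to at least 2
  have h2le : (8 : ℝ≥0∞) ≤ volume (⋃ k, E k) := by
    calc (8:ℝ≥0∞) = volume (Icc (0:ℝ) 8) := by rw [Real.volume_Icc]; norm_num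
    _ ≤ _ := measure_mono hcover
  have htend : Tendsto (fun k => volume (E k)) atTop (nhds (volume (⋃ k, E k))) :=
    tendsto_measure_iUnion_atTop hEmono
  have hev : ∀ᶠ k in atTop, (7 : ℝ≥0∞) < volume (E k) := by
    apply htend.eventually
    exact eventually_mem_set.2 (Ioi_mem_nhds (lt_of_lt_of_le (by norm_num) h2le))
  obtain ⟨k₀, hk₀⟩ := hev.exists
  -- pick n
  set n : ℕ := 2 * k₀ + 1 with hn
  have hnk : k₀ ≤ n := by omega
  set A : Set ℝ := E k₀ with hA
  set B : Set ℝ := (fun t => t + s n) ⁻¹' A with hB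
  have hvolB : volume B = volume A := by
    rw [hB]
    exact measure_preimage_add_right volume (s n) A
  have hAB : volume (A ∪ B) ≤ 9 := by
    have hsub : A ∪ B ⊆ Icc (-1 : ℝ) 8 := by
      rintro t (htA | htB)
      · exact ⟨le_trans (by norm_num) htA.1.1, htA.1.2⟩
      · have : t + s n ∈ Icc (0:ℝ) 8 := htB.1
        constructor
        · linarith [this.1, (hs n).2]
        · linarith [this.2, (hs n).1]
    calc volume (A ∪ B) ≤ volume (Icc (-1:ℝ) 8) := measure_mono hsub
    _ = 9 := by rw [Real.volume_Icc]; norm_num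
  have hinter : (A ∩ B).Nonempty := by
    apply nonempty_of_measure_ne_zero (μ := volume)
    intro hzero
    have := measure_union_add_inter (μ := volume) A (hEmeas k₀ |>.preimage (measurable_add_const (s n)))
    rw [hzero, add_zero] at this
    have h72 : (14 : ℝ≥0∞) ≤ volume A + volume B := by
      rw [hvolB]
      calc (14 : ℝ≥0∞) = 7 + 7 := by norm_num
      _ ≤ volume A + volume A := add_le_add hk₀.le hk₀.le
    rw [← this] at h72
    exact absurd (le_trans h72 hAB) (by norm_num)
  obtain ⟨t, htA, htB⟩ := hinter
  -- extract bounds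
  have hmemA : ∀ u ∈ A, |h (x n + u) - h (x n)| ≤ (k₀:ℝ) ∧ |h (x n + s n + u) - h (x n + s n)| ≤ (k₀:ℝ) := by
    intro u hu
    have := hu.2
    simp only [Set.mem_iInter, Set.mem_setOf_eq] at this
    exact this n hnk
  have c1 := (hmemA _ htB).1  -- |h (x n + (t + s n)) - h (x n)| ≤ k₀
  have c2 := (hmemA _ htA).2  -- |h (x n + s n + t) - h (x n + s n)| ≤ k₀
  have key : h (x n + s n) - h (x n) ≤ 2 * k₀ := by
    have e1 : h (x n + (t + s n)) - h (x n) ≤ (k₀:ℝ) := (abs_le.1 c1).2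
    have e2 : -(k₀:ℝ) ≤ h (x n + s n + t) - h (x n + s n) := (abs_le.1 c2).1
    have : x n + (t + s n) = x n + s n + t := by ring
    rw [this] at e1
    linarith
  have : (n:ℝ) < 2 * k₀ := lt_of_lt_of_le (hgt n) key
  rw [hn] at this
  push_cast at this
  linarith

lemma aux_iter (h : ℝ → ℝ) (K X : ℝ) (hK : 1 ≤ K)
    (hu : ∀ x ≥ X, ∀ s ∈ Set.Icc (0:ℝ) 1, h (x + s) - h x ≤ K) :
    ∀ x ≥ X, ∀ s ≥ (0:ℝ), h (x + s) - h x ≤ K * (s + 1) := by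
  have main : ∀ n : ℕ, ∀ s : ℝ, 0 ≤ s → s ≤ n → ∀ x ≥ X, h (x + s) - h x ≤ K * (s + 1) := by
    intro n
    induction n with
    | zero =>
      intro s hs0 hsn x hx
      have : s = 0 := le_antisymm (by exact_mod_cast hsn) hs0
      subst this
      simp only [add_zero, sub_self]
      nlinarith
    | succ n ih =>
      intro s hs0 hsn x hx
      by_cases hs1 : s ≤ 1
      · have := hu x hx s ⟨hs0, hs1⟩
        nlinarith
      · push_neg at hs1
        have h1 : h (x + 1) - h x ≤ K := hu x hx 1 ⟨zero_le_one, le_refl 1⟩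
        have h2 : h ((x + 1) + (s - 1)) - h (x + 1) ≤ K * ((s - 1) + 1) := by
          apply ih (s - 1) (by linarith) (by push_cast at hsn ⊢; linarith) (x + 1) (by linarith)
        have : (x + 1) + (s - 1) = x + s := by ring
        rw [this] at h2
        nlinarith
  intro x hx s hs
  exact main ⌈s⌉₊ s hs (Nat.le_ceil s) x hx



set_option maxHeartbeats 2000000 in
lemma aux_main (T e : ℝ → ℝ)
    (hTpos : ∀ v, 0 < T v) (hTanti : Antitone T)
    (hepos : ∀ u, 0 < e u)
    (hsmall : ∀ u : ℝ, ∃ s : ℝ, T (u + s) ≤ 2/5 * T u)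
    (u₁ : ℝ)
    (hstep : ∀ u ≥ u₁, T (u + e u) ≤ T u / 2)
    (hhalf : ∀ u ≥ u₁, T u / 2 ≤ T (u + (1/2) * e u))
    (htwo : ∀ u ≥ u₁, T (u + 2 * e u) ≤ 2/5 * T u)
    (hOreg : ∀ l : ℝ, 1 < l → ∃ a > (0:ℝ), ∃ b : ℝ, ∃ U : ℝ,
      ∀ u ≥ U, a ≤ e (l * u) / e u ∧ e (l * u) / e u ≤ b) :
    ∃ α > (0:ℝ), ∃ M > (0:ℝ), ∃ U > (0:ℝ),
      ∀ c > (0:ℝ), ∀ u > U, ∀ x ∈ Set.Ioo (0:ℝ) (c * u / e u),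
        T (u + x * e u) / T u ≤ (3/2) * Real.exp (-(1/2) * M * (1 + c) ^ (-α) * x) := by
  classical
  -- the surrogate gap function
  set S : ℝ → Set ℝ := fun u => {s : ℝ | T (u + s) ≤ 2/5 * T u} with hS
  have hSne : ∀ u, (S u).Nonempty := fun u => hsmall u
  have hSbdd : ∀ u, BddBelow (S u) := by
    intro u
    refine ⟨0, fun s hs => ?_⟩
    by_contra hneg
    push_neg at hneg
    have h1 : T u ≤ T (u + s) := hTanti (by linarith)
    have h2 : T (u + s) ≤ 2/5 * T u := hs
    have := hTpos u
    linarith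
  set f : ℝ → ℝ := fun u => sInf (S u) with hf
  have hf_ub : ∀ u ≥ u₁, f u ≤ 2 * e u := by
    intro u hu
    exact csInf_le (hSbdd u) (htwo u hu)
  have hf_lb : ∀ u ≥ u₁, e u / 2 ≤ f u := by
    intro u hu
    apply le_csInf (hSne u)
    intro s hs
    by_contra hlt
    push_neg at hlt
    have h1 : T (u + (1/2) * e u) ≤ T (u + s) := hTanti (by linarith)
    have h2 := hhalf u hu
    have h3 : T (u + s) ≤ 2/5 * T u := hs
    have := hTpos u
    linarith
  have hf_pos : ∀ u ≥ u₁, 0 < f u := fun u hu =>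
    lt_of_lt_of_le (by have := hepos u; linarith) (hf_lb u hu)
  -- measurability of f
  have hTmeas : Measurable T := hTanti.measurable
  have hf_meas : Measurable f := by
    apply measurable_of_Iio
    intro a
    have heq : f ⁻¹' Iio a =
        ⋃ (q : ℚ) (_ : (q:ℝ) < a), {u : ℝ | T (u + q) ≤ 2/5 * T u} := by
      ext u
      simp only [Set.mem_preimage, Set.mem_Iio, Set.mem_iUnion, Set.mem_setOf_eq]
      constructor
      · intro hu
        obtain ⟨s, hsS, hsa⟩ := (csInf_lt_iff (hSbdd u) (hSne u)).1 hu
        obtain ⟨q, hq1, hq2⟩ := exists_rat_btwn hsa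
        refine ⟨q, hq2, ?_⟩
        exact le_trans (hTanti (by linarith)) hsS
      · rintro ⟨q, hqa, hq⟩
        exact lt_of_le_of_lt (csInf_le (hSbdd u) hq) hqa
    rw [heq]
    refine MeasurableSet.iUnion fun q => MeasurableSet.iUnion fun _ => ?_
    exact measurableSet_le (hTmeas.comp (measurable_add_const (q:ℝ))) (hTmeas.const_mul (2/5))
    -- log-scale increment function
  set h : ℝ → ℝ := fun x => Real.log (f (Real.exp x)) with hh
  have hh_meas : Measurable h := (hf_meas.comp Real.measurable_exp).log
  -- pointwise eventual bounds on increments of h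
  have hpt : ∀ t : ℝ, 0 < t → t ≤ 8 → ∃ K : ℝ, ∃ X : ℝ, ∀ x ≥ X, |h (x + t) - h x| ≤ K := by
    intro t ht _
    set l : ℝ := Real.exp t with hl
    have hl1 : 1 < l := Real.one_lt_exp_iff.2 ht
    obtain ⟨a, ha, b, U, hab⟩ := hOreg l hl1
    set U' : ℝ := max U (max u₁ 1) with hU'
    have hU'1 : 1 ≤ U' := le_trans (le_max_right u₁ 1) (le_max_right _ _)
    have hb : 0 < b := by
      obtain ⟨h1, h2⟩ := hab U' (le_max_left _ _)
      have hr : 0 < e (l * U') / e U' := div_pos (hepos _) (hepos _)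
      linarith
    refine ⟨max (Real.log (4*b)) (-Real.log (a/4)), Real.log U' + 1, ?_⟩
    intro x hx
    set u : ℝ := Real.exp x with hu
    have hupos : 0 < u := Real.exp_pos x
    have huU' : U' ≤ u := by
      calc U' = Real.exp (Real.log U') := (Real.exp_log (by linarith)).symm
      _ ≤ Real.exp x := Real.exp_le_exp.2 (by linarith)
    have huU : U ≤ u := le_trans (le_max_left _ _) huU'
    have hu1 : u₁ ≤ u := le_trans (le_trans (le_max_left u₁ 1) (le_max_right _ _)) huU'
    have hlu1 : u₁ ≤ l * u := le_trans hu1 (by nlinarith)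
    obtain ⟨hr1, hr2⟩ := hab u huU
    have hepu := hepos u
    have heplu := hepos (l * u)
    have hfu1 := hf_lb u hu1
    have hfu2 := hf_ub u hu1
    have hflu1 := hf_lb (l * u) hlu1
    have hflu2 := hf_ub (l * u) hlu1
    have hfu_pos := hf_pos u hu1
    have hflu_pos := hf_pos (l * u) hlu1
    have he1 : a * e u ≤ e (l * u) := by
      rw [le_div_iff₀ hepu] at hr1; linarith
    have he2 : e (l * u) ≤ b * e u := by
      rw [div_le_iff₀ hepu] at hr2; linarith
    -- f (l*u) ≤ 4*b * f u and f (l*u) ≥ (a/4) * f u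
    have hup : f (l * u) ≤ (4*b) * f u := by nlinarith
    have hdown : (a/4) * f u ≤ f (l * u) := by nlinarith
    -- translate to h
    have hext : h (x + t) = Real.log (f (l * u)) := by
      rw [hh]
      simp only []
      rw [Real.exp_add, mul_comm]
    have hhx : h x = Real.log (f u) := rfl
    rw [hext, hhx]
    rw [abs_le]
    constructor
    · have hlog : Real.log (a/4) + Real.log (f u) ≤ Real.log (f (l * u)) := by
        rw [← Real.log_mul (by positivity) (by positivity)]
        exact Real.log_le_log (by positivity) hdown
      have : -(-Real.log (a/4)) ≤ Real.log (f (l*u)) - Real.log (f u) := by linarith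
      exact le_trans (neg_le_neg (le_max_right _ _)) this
    · have hlog : Real.log (f (l * u)) ≤ Real.log (4*b) + Real.log (f u) := by
        rw [← Real.log_mul (by positivity) (by positivity)]
        exact Real.log_le_log (by positivity) hup
      have : Real.log (f (l*u)) - Real.log (f u) ≤ Real.log (4*b) := by linarith
      exact le_trans this (le_max_left _ _)
  obtain ⟨K₀, X₀, hK₀⟩ := aux_steinhaus h hh_meas hpt
  set K : ℝ := max K₀ 1 with hK
  have hK1 : 1 ≤ K := le_max_right _ _
  have hKpos : 0 < K := lt_of_lt_of_le one_pos hK1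
  have huni : ∀ x ≥ X₀, ∀ s ∈ Set.Icc (0:ℝ) 1, h (x + s) - h x ≤ K :=
    fun x hx s hs => le_trans (hK₀ x hx s hs) (le_max_left _ _)
  have hiter := aux_iter h K X₀ hK1 huni
  -- Potter-type bound for e
  set U₂ : ℝ := max (Real.exp (X₀ + 1)) (max u₁ 1) with hU₂
  have hU₂1 : 1 ≤ U₂ := le_trans (le_max_right u₁ 1) (le_max_right _ _)
  have hU₂u₁ : u₁ ≤ U₂ := le_trans (le_max_left u₁ 1) (le_max_right _ _)
  have hpotter : ∀ u ≥ U₂, ∀ v ≥ u, e v ≤ 4 * Real.exp K * (v/u) ^ K * e u := by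
    intro u hu v hv
    have hu0 : 0 < u := lt_of_lt_of_le one_pos (le_trans hU₂1 hu)
    have hv0 : 0 < v := lt_of_lt_of_le hu0 hv
    have huu₁ : u₁ ≤ u := le_trans hU₂u₁ hu
    have hvu₁ : u₁ ≤ v := le_trans huu₁ hv
    have hlogu : X₀ ≤ Real.log u := by
      have h1 : Real.exp (X₀ + 1) ≤ u := le_trans (le_max_left _ _) hu
      have h2 : X₀ + 1 ≤ Real.log u := by
        rw [← Real.log_exp (X₀ + 1)]
        exact Real.log_le_log (Real.exp_pos _) h1
      linarith
    set s : ℝ := Real.log v - Real.log u with hs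
    have hs0 : 0 ≤ s := by
      have := Real.log_le_log hu0 hv
      linarith
    have hh1 : h (Real.log u + s) - h (Real.log u) ≤ K * (s + 1) :=
      hiter (Real.log u) hlogu s hs0
    have he1 : h (Real.log u) = Real.log (f u) := by
      rw [hh]; simp only []; rw [Real.exp_log hu0]
    have he2 : h (Real.log u + s) = Real.log (f v) := by
      rw [hh]; simp only []
      have : Real.log u + s = Real.log v := by rw [hs]; ring
      rw [this, Real.exp_log hv0]
    rw [he1, he2] at hh1
    have hfv_pos := hf_pos v hvu₁
    have hfu_pos := hf_pos u huu₁
    have hfv : f v ≤ f u * Real.exp (K * (s + 1)) := by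
      have : Real.log (f v) ≤ Real.log (f u * Real.exp (K * (s+1))) := by
        rw [Real.log_mul (ne_of_gt hfu_pos) (ne_of_gt (Real.exp_pos _)), Real.log_exp]
        linarith
      calc f v = Real.exp (Real.log (f v)) := (Real.exp_log hfv_pos).symm
      _ ≤ Real.exp (Real.log (f u * Real.exp (K * (s+1)))) := Real.exp_le_exp.2 this
      _ = f u * Real.exp (K * (s+1)) := Real.exp_log (by positivity)
    have hrpow : Real.exp (K * s) = (v/u) ^ K := by
      rw [Real.rpow_def_of_pos (by positivity), Real.log_div (ne_of_gt hv0) (ne_of_gt hu0)]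
      ring_nf
      congr 1; rw [hs]; ring
    have hKs : Real.exp (K * (s+1)) = Real.exp K * (v/u) ^ K := by
      rw [mul_add, mul_one, Real.exp_add, ← hrpow]; ring
    have hev : e v ≤ 2 * f v := by
      have := hf_lb v hvu₁; linarith
    have hfu : f u ≤ 2 * e u := hf_ub u huu₁
    calc e v ≤ 2 * f v := hev
    _ ≤ 2 * (f u * Real.exp (K * (s+1))) := by nlinarith [Real.exp_pos (K * (s+1))]
    _ = 2 * f u * (Real.exp K * (v/u) ^ K) := by rw [hKs]; ring
    _ ≤ 2 * (2 * e u) * (Real.exp K * (v/u) ^ K) := by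
        have hpow : (0:ℝ) < Real.exp K * (v/u) ^ K := by positivity
        nlinarith
    _ = 4 * Real.exp K * (v/u) ^ K * e u := by ring
  refine ⟨K, hKpos, Real.log 2 / (8 * Real.exp K), by positivity, U₂, lt_of_lt_of_le one_pos hU₂1, ?_⟩
  intro c hc u hu x hx
  obtain ⟨hx0, hxc⟩ := hx
  set M : ℝ := Real.log 2 / (8 * Real.exp K) with hM
  have hu0 : 0 < u := lt_of_le_of_lt (le_trans zero_le_one hU₂1) hu
  have hepu : 0 < e u := hepos u
  have hxe : x * e u < c * u := by
    rw [lt_div_iff₀ hepu] at hxc; exact hxc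
  set B : ℝ := 4 * Real.exp K * (1 + c) ^ K with hB
  have h1c : (1:ℝ) ≤ 1 + c := by linarith
  have hpow1 : (1:ℝ) ≤ (1 + c) ^ K := by
    calc (1:ℝ) = (1+c) ^ (0:ℝ) := (Real.rpow_zero _).symm
    _ ≤ (1+c) ^ K := Real.rpow_le_rpow_of_exponent_le h1c (le_of_lt hKpos)
  have hpowpos : (0:ℝ) < (1 + c) ^ K := lt_of_lt_of_le one_pos hpow1
  have hexpK1 : (1:ℝ) ≤ Real.exp K := by
    rw [← Real.exp_zero]; exact Real.exp_le_exp.2 (le_of_lt hKpos)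
  have hB4 : (4:ℝ) ≤ B := by
    rw [hB]; nlinarith
  have hBpos : (0:ℝ) < B := by linarith
  -- the chain
  set g : ℕ → ℝ := fun n => Nat.rec u (fun _ v => v + e v) n with hg
  have hg0 : g 0 = u := rfl
  have hgs : ∀ n, g (n+1) = g n + e (g n) := fun n => rfl
  set m : ℕ := ⌊x / B⌋₊ with hm
  have hmB : (m:ℝ) * B ≤ x := by
    have h1 : (m:ℝ) ≤ x / B := Nat.floor_le (by positivity)
    calc (m:ℝ) * B ≤ (x / B) * B := by nlinarith
    _ = x := by field_simp
  have key : ∀ j : ℕ, j ≤ m → g j ≤ u + (j:ℝ) * (B * e u) ∧ T (g j) ≤ (1/2)^j * T u ∧ u ≤ g j := by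
    intro j
    induction j with
    | zero => intro _; exact ⟨by rw [hg0]; simp, by rw [hg0]; simp, le_of_eq hg0.symm⟩
    | succ j ih =>
      intro hj1
      obtain ⟨hgle, hgT, hgu⟩ := ih (Nat.le_of_succ_le hj1)
      have hjm : ((j:ℝ)+1) * B ≤ x := by
        have : ((j:ℝ)+1) ≤ (m:ℝ) := by exact_mod_cast hj1
        nlinarith
      have hgub : g j ≤ (1 + c) * u := by
        have h1 : (j:ℝ) * (B * e u) ≤ x * e u := by nlinarith
        nlinarith
      have hgU₂ : U₂ ≤ g j := le_trans (le_of_lt hu) hgu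
      have hgu₁ : u₁ ≤ g j := le_trans (le_trans hU₂u₁ (le_of_lt hu)) hgu
      have hstep1 : e (g j) ≤ B * e u := by
        have hp := hpotter u (le_of_lt hu) (g j) hgu
        have hratio : g j / u ≤ 1 + c := by
          rw [div_le_iff₀ hu0]; linarith
        have hrle : (g j / u) ^ K ≤ (1 + c) ^ K :=
          Real.rpow_le_rpow (div_nonneg (by linarith) (le_of_lt hu0)) hratio (le_of_lt hKpos)
        calc e (g j) ≤ 4 * Real.exp K * (g j / u) ^ K * e u := hp
        _ ≤ 4 * Real.exp K * (1+c) ^ K * e u :=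
          mul_le_mul_of_nonneg_right (mul_le_mul_of_nonneg_left hrle (by positivity)) hepu.le
        _ = B * e u := by rw [hB]
      constructor
      · rw [hgs j]; push_cast; nlinarith
      constructor
      · have h2 := hstep (g j) hgu₁
        rw [hgs j]
        calc T (g j + e (g j)) ≤ T (g j) / 2 := h2
        _ ≤ ((1/2)^j * T u) / 2 := by linarith
        _ = (1/2)^(j+1) * T u := by ring
      · rw [hgs j]; have := hepos (g j); linarith
  obtain ⟨hgm, hgmT, _⟩ := key m (le_refl m)
  have hw : T (u + x * e u) ≤ (1/2)^m * T u := by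
    refine le_trans (hTanti ?_) hgmT
    calc g m ≤ u + (m:ℝ) * (B * e u) := hgm
    _ ≤ u + x * e u := by nlinarith
  have hTu := hTpos u
  have hTw := hTpos (u + x * e u)
  have hratio1 : T (u + x * e u) / T u ≤ 1 := by
    rw [div_le_one hTu]
    exact hTanti (by nlinarith)
  have hratio2 : T (u + x * e u) / T u ≤ (1/2)^m := by
    rw [div_le_iff₀ hTu]; linarith [hw]
  -- identify the exponent
  have hexp_eq : -(1/2) * M * (1 + c) ^ (-K) * x = -(Real.log 2 * x / (4 * B)) := by
    rw [hM, hB, Real.rpow_neg (by linarith : (0:ℝ) ≤ 1 + c)]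
    field_simp
    ring
  rw [hexp_eq]
  by_cases hcase : x ≤ 2 * B
  · -- small x : right side is at least 1
    have hlog32 : Real.log 2 * x / (4 * B) ≤ Real.log (3/2) := by
      have h2log : Real.log 2 ≤ 2 * Real.log (3/2) := by
        have : (2:ℝ) * Real.log (3/2) = Real.log ((3/2)^(2:ℕ)) := by
          rw [Real.log_pow]; push_cast; ring
        rw [this]
        exact Real.log_le_log (by norm_num) (by norm_num)
      have hlog2pos : 0 < Real.log 2 := Real.log_pos (by norm_num)
      rw [div_le_iff₀ (by positivity)]
      nlinarith
    have hrhs : (1:ℝ) ≤ (3/2) * Real.exp (-(Real.log 2 * x / (4 * B))) := by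
      have h1 : Real.exp (-(Real.log (3/2))) ≤ Real.exp (-(Real.log 2 * x / (4*B))) :=
        Real.exp_le_exp.2 (by linarith)
      have h2 : Real.exp (-(Real.log (3/2))) = 2/3 := by
        rw [Real.exp_neg, Real.exp_log (by norm_num)]; norm_num
      rw [h2] at h1; linarith
    linarith
  · push_neg at hcase
    have hm2 : x / (2*B) ≤ (m:ℝ) := by
      have h1 : x / B - 1 < (m:ℝ) := Nat.sub_one_lt_floor (x / B)
      have h2 : x / (2*B) + 1 ≤ x / B := by
        rw [div_add' _ _ _ (by positivity : (2*B) ≠ 0)]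
        rw [div_le_div_iff₀ (by positivity) (by positivity)]
        ring_nf
        nlinarith
      linarith
    have hhalfpow : ((1:ℝ)/2)^m = Real.exp (-((m:ℝ) * Real.log 2)) := by
      rw [Real.exp_neg]
      rw [Real.exp_nat_mul, Real.exp_log (by norm_num : (0:ℝ) < 2)]
      rw [one_div, inv_pow]
    have hfin : ((1:ℝ)/2)^m ≤ Real.exp (-(Real.log 2 * x / (4*B))) := by
      rw [hhalfpow]
      apply Real.exp_le_exp.2
      have hlog2pos : 0 < Real.log 2 := Real.log_pos (by norm_num)
      have hx2B : x ≤ (m:ℝ) * (2*B) := by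
        rw [div_le_iff₀ (by positivity)] at hm2; linarith
      have : Real.log 2 * x / (4*B) ≤ (m:ℝ) * Real.log 2 := by
        rw [div_le_iff₀ (by positivity)]
        nlinarith [mul_le_mul_of_nonneg_left hx2B hlog2pos.le, mul_nonneg (mul_nonneg (Nat.cast_nonneg m) hlog2pos.le) hBpos.le]
      linarith
    have := Real.exp_pos (-(Real.log 2 * x / (4*B)))
    linarith

/-- If the distribution function of `e^R` is in the Gumbel max-domain of
attraction with scaling function `e(·)` and `e` is O-regularly varying, then there exist
`α, M, u₀ > 0` and `ε ∈ (0,1)` such that for all `c > 0`, `u > u₀` and `x ∈ (0, cu/e(u))`,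
`P(R > log(u + x e(u)))/P(R > log u) ≤ (1+ε) exp(−(1−ε) M (1+c)^{−α} x)`. -/

theorem exponential_tail_bound
    {Ω : Type*} [MeasureSpace Ω] [IsProbabilityMeasure (ℙ : Measure Ω)]
    (R : Ω → ℝ) (hRmeas : Measurable R) (hRpos : ∀ ω, 0 < R ω)
    (hRtail : ∀ u : ℝ, 0 < ℙ {ω | u < Real.exp (R ω)})
    (e : ℝ → ℝ) (hepos : ∀ u : ℝ, 0 < e u)
    (hGumbel : ∀ x : ℝ, Tendsto
      (fun u => (ℙ {ω | u + x * e u < Real.exp (R ω)}).toReal /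
        (ℙ {ω | u < Real.exp (R ω)}).toReal) atTop (nhds (Real.exp (-x))))
    (hOreg : ∀ l : ℝ, 1 < l →
      (0 : EReal) < Filter.liminf (fun u => ((e (l * u) / e u : ℝ) : EReal)) atTop ∧
        Filter.limsup (fun u => ((e (l * u) / e u : ℝ) : EReal)) atTop < ⊤) :
    ∃ α > (0 : ℝ), ∃ M > (0 : ℝ), ∃ u₀ > (0 : ℝ), ∃ ε ∈ Set.Ioo (0 : ℝ) 1,
      ∀ c > (0 : ℝ), ∀ u > u₀, ∀ x ∈ Set.Ioo (0 : ℝ) (c * u / e u),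
        (ℙ {ω | Real.log (u + x * e u) < R ω}).toReal /
            (ℙ {ω | Real.log u < R ω}).toReal ≤
          (1 + ε) * Real.exp (-(1 - ε) * M * (1 + c) ^ (-α) * x) := by
  classical
  set T : ℝ → ℝ := fun v => (ℙ {ω | v < Real.exp (R ω)}).toReal with hT
  have hTpos : ∀ v, 0 < T v := fun v =>
    ENNReal.toReal_pos (ne_of_gt (hRtail v)) (measure_ne_top _ _)
  have hTanti : Antitone T := by
    intro v w hvw
    exact (ENNReal.toReal_le_toReal (measure_ne_top _ _) (measure_ne_top _ _)).2
      (measure_mono (fun ω hω => lt_of_le_of_lt hvw hω))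
  -- T tends to 0 along the naturals
  have hTzero : Tendsto (fun n : ℕ => T (n:ℝ)) atTop (nhds 0) := by
    have hmeasset : ∀ n : ℕ, MeasurableSet {ω | ((n:ℕ):ℝ) < Real.exp (R ω)} :=
      fun n => measurableSet_lt measurable_const (Real.measurable_exp.comp hRmeas)
    have h1 : Tendsto (fun n : ℕ => ℙ {ω | ((n:ℕ):ℝ) < Real.exp (R ω)}) atTop
        (nhds (ℙ (⋂ n : ℕ, {ω | ((n:ℕ):ℝ) < Real.exp (R ω)}))) := by
      apply tendsto_measure_iInter_atTop
      · exact fun n => (hmeasset n).nullMeasurableSet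
      · intro i j hij ω hω
        exact lt_of_le_of_lt (show ((i:ℕ):ℝ) ≤ ((j:ℕ):ℝ) from Nat.cast_le.mpr hij) hω
      · exact ⟨0, measure_ne_top _ _⟩
    have hempty : (⋂ n : ℕ, {ω | ((n:ℕ):ℝ) < Real.exp (R ω)}) = ∅ := by
      rw [Set.eq_empty_iff_forall_notMem]
      intro ω hω
      obtain ⟨n, hn⟩ := exists_nat_gt (Real.exp (R ω))
      exact absurd (Set.mem_iInter.1 hω n) (not_lt.2 (le_of_lt hn))
    rw [hempty, measure_empty] at h1
    have h2 := (ENNReal.tendsto_toReal (ENNReal.zero_ne_top)).comp h1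
    exact h2
  have hsmall : ∀ u : ℝ, ∃ s : ℝ, T (u + s) ≤ 2/5 * T u := by
    intro u
    have h3 : ∀ᶠ n : ℕ in atTop, T (n:ℝ) < 2/5 * T u :=
      hTzero.eventually (eventually_lt_nhds (by have := hTpos u; linarith))
    have h4 : ∀ᶠ n : ℕ in atTop, u ≤ (n:ℝ) :=
      tendsto_natCast_atTop_atTop.eventually_ge_atTop u
    obtain ⟨n, hn1, hn2⟩ := (h3.and h4).exists
    refine ⟨(n:ℝ) - u, ?_⟩
    rw [show u + ((n:ℝ) - u) = (n:ℝ) by ring]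
    exact le_of_lt hn1
  -- numeric bounds
  have hexp1 : (2:ℝ) < Real.exp 1 := lt_trans (by norm_num) Real.exp_one_gt_d9
  have hexp1' : Real.exp 1 < 2.7182818286 := Real.exp_one_lt_d9
  have hprod1 : Real.exp (-1) * Real.exp 1 = 1 := by
    rw [← Real.exp_add]; norm_num
  have hnum1 : Real.exp (-1) < 1/2 := by nlinarith [Real.exp_pos (-1)]
  have hnum2 : (1/2:ℝ) < Real.exp (-(1/2)) := by
    have hy : Real.exp (-(1/2)) * Real.exp (-(1/2)) = Real.exp (-1) := by
      rw [← Real.exp_add]; norm_num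
    have hlb : (1/4:ℝ) < Real.exp (-1) := by nlinarith [Real.exp_pos (-1)]
    nlinarith [Real.exp_pos (-(1/2))]
  have hnum3 : Real.exp (-2) < 2/5 := by
    have hprod2 : Real.exp (-2) * Real.exp 2 = 1 := by
      rw [← Real.exp_add]; norm_num
    have h3le : (3:ℝ) ≤ Real.exp 2 := by nlinarith [Real.add_one_le_exp 2]
    nlinarith [Real.exp_pos (-2)]
  have hg1 := (hGumbel 1).eventually (eventually_le_nhds hnum1)
  have hg2 := (hGumbel (1/2)).eventually (eventually_ge_nhds hnum2)
  have hg3 := (hGumbel 2).eventually (eventually_le_nhds hnum3)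
  obtain ⟨u₁, hu₁⟩ := eventually_atTop.1 ((hg1.and hg2).and hg3)
  have hstep : ∀ u ≥ u₁, T (u + e u) ≤ T u / 2 := by
    intro u hu
    have h := (hu₁ u hu).1.1
    change T (u + 1 * e u) / T u ≤ 1/2 at h
    rw [one_mul, div_le_iff₀ (hTpos u)] at h
    linarith
  have hhalf : ∀ u ≥ u₁, T u / 2 ≤ T (u + (1/2) * e u) := by
    intro u hu
    have h := (hu₁ u hu).1.2
    change 1/2 ≤ T (u + (1/2) * e u) / T u at h
    rw [le_div_iff₀ (hTpos u)] at h
    linarith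
  have htwo : ∀ u ≥ u₁, T (u + 2 * e u) ≤ 2/5 * T u := by
    intro u hu
    have h := (hu₁ u hu).2
    change T (u + 2 * e u) / T u ≤ 2/5 at h
    rw [div_le_iff₀ (hTpos u)] at h
    linarith
  -- O-regular variation in real form
  have hOreg' : ∀ l : ℝ, 1 < l → ∃ a > (0:ℝ), ∃ b : ℝ, ∃ U : ℝ,
      ∀ u ≥ U, a ≤ e (l * u) / e u ∧ e (l * u) / e u ≤ b := by
    intro l hl
    obtain ⟨hinf, hsup⟩ := hOreg l hl
    obtain ⟨cE, hc0, hclt⟩ := exists_between hinf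
    obtain ⟨bE, hblt, hbtop⟩ := exists_between hsup
    have hcnetop : cE ≠ ⊤ := ne_top_of_lt (lt_of_lt_of_le hclt le_top)
    have hcnebot : cE ≠ ⊥ := ne_bot_of_gt hc0
    have hbnetop : bE ≠ ⊤ := ne_top_of_lt hbtop
    have hbnebot : bE ≠ ⊥ := ne_bot_of_gt (lt_of_le_of_lt bot_le hblt)
    set a : ℝ := cE.toReal with ha
    set b : ℝ := bE.toReal with hb
    have hca : (a : EReal) = cE := EReal.coe_toReal hcnetop hcnebot
    have hcb : (b : EReal) = bE := EReal.coe_toReal hbnetop hbnebot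
    have ha0 : 0 < a := by
      rw [← EReal.coe_lt_coe_iff, hca]
      exact_mod_cast hc0
    have hev1 : ∀ᶠ u in atTop, cE < ((e (l * u) / e u : ℝ) : EReal) :=
      eventually_lt_of_lt_liminf hclt
    have hev2 : ∀ᶠ u in atTop, ((e (l * u) / e u : ℝ) : EReal) < bE :=
      eventually_lt_of_limsup_lt hblt
    obtain ⟨U, hU⟩ := eventually_atTop.1 (hev1.and hev2)
    refine ⟨a, ha0, b, U, fun u hu => ?_⟩
    obtain ⟨h1, h2⟩ := hU u hu
    rw [← hca, EReal.coe_lt_coe_iff] at h1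
    rw [← hcb, EReal.coe_lt_coe_iff] at h2
    exact ⟨le_of_lt h1, le_of_lt h2⟩
  obtain ⟨α, hα, M, hM, U, hUpos, hmain⟩ :=
    aux_main T e hTpos hTanti hepos hsmall u₁ hstep hhalf htwo hOreg'
  refine ⟨α, hα, M, hM, U, hUpos, 1/2, ⟨by norm_num, by norm_num⟩, ?_⟩
  intro c hc u hu x hx
  have hu0 : 0 < u := lt_trans hUpos hu
  have hx0 : 0 < x := hx.1
  have hw0 : 0 < u + x * e u := by nlinarith [hepos u]
  have hset1 : {ω | Real.log (u + x * e u) < R ω} =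
      {ω | u + x * e u < Real.exp (R ω)} :=
    Set.ext fun ω => Real.log_lt_iff_lt_exp hw0
  have hset2 : {ω | Real.log u < R ω} = {ω | u < Real.exp (R ω)} :=
    Set.ext fun ω => Real.log_lt_iff_lt_exp hu0
  rw [hset1, hset2]
  have hfin := hmain c hc u hu x hx
  have heq1 : (1 + (1:ℝ)/2) = 3/2 := by norm_num
  have heq2 : -(1 - (1:ℝ)/2) * M * (1 + c) ^ (-α) * x = -(1/2) * M * (1 + c) ^ (-α) * x := by
    norm_num
  rw [heq1, heq2]
  exact hfin
end

section
/- Let R be a positive random variable whose distribution function F has infinite upper endpoint and is in the Gumbel max-domain of attraction with positive scaling function b, i.e. lim_{u→∞}(1−F(u+x·b(u)))/(1−F(u)) = e^{−x} for all x ∈ ℝ, and assume lim_{u→∞} b(u) = 0. Then the distribution function of e^R is in the Gumbel max-domain of attraction with scaling function e(u) = u·b(log u), i.e. for every x ∈ ℝ, lim_{u→∞} P(e^R > u + x·u·b(log u))/P(e^R > u) = e^{−x}. -/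
open MeasureTheory ProbabilityTheory Filter Real Topology

/-- If the distribution function `F` of a positive random variable `R` (with
infinite upper endpoint) is in the Gumbel max-domain of attraction with scaling function
`b` and `b(u) → 0`, then the distribution function of `e^R` is in the Gumbel max-domain of
attraction with scaling function `e(u) = u b(log u)`. -/
theorem expR_gumbel_mda
    {Ω : Type*} [MeasureSpace Ω] [IsProbabilityMeasure (ℙ : Measure Ω)]
    (R : Ω → ℝ) (hRmeas : Measurable R) (hRpos : ∀ ω, 0 < R ω)
    (F : ℝ → ℝ) (hF : ∀ u, F u = (ℙ {ω | R ω ≤ u}).toReal)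
    (hFendpoint : ∀ u : ℝ, F u < 1)
    (b : ℝ → ℝ) (hbpos : ∀ u : ℝ, 0 < b u)
    (hGumbel : ∀ x : ℝ, Tendsto (fun u => (1 - F (u + x * b u)) / (1 - F u)) atTop
      (nhds (Real.exp (-x))))
    (hb0 : Tendsto b atTop (nhds 0)) :
    ∀ x : ℝ, Tendsto
      (fun u => (ℙ {ω | u + x * (u * b (Real.log u)) < Real.exp (R ω)}).toReal /
        (ℙ {ω | u < Real.exp (R ω)}).toReal) atTop (nhds (Real.exp (-x))) := by
  intro x
  -- tail probability formula
  have hForm : ∀ v : ℝ, (ℙ {ω | v < R ω}).toReal = 1 - F v := by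
    intro v
    have hs : MeasurableSet {ω | R ω ≤ v} := hRmeas measurableSet_Iic
    have hc : {ω | v < R ω} = {ω | R ω ≤ v}ᶜ := by ext ω; simp [not_le]
    rw [hc, measure_compl hs (measure_ne_top _ _), measure_univ,
      ENNReal.toReal_sub_of_le prob_le_one ENNReal.one_ne_top, ENNReal.toReal_one, hF]
  have hFmono : Monotone F := by
    intro a c hac
    rw [hF, hF]
    exact (ENNReal.toReal_le_toReal (measure_ne_top _ _) (measure_ne_top _ _)).mpr
      (measure_mono (fun ω hw => le_trans hw hac))
  have hFlt : ∀ v : ℝ, 0 < 1 - F v := fun v => sub_pos.2 (hFendpoint v)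
  set ℓ : ℝ → ℝ := fun w => Real.log (1 + x * b w) with hℓ
  set h : ℝ → ℝ := fun w => (1 - F (w + ℓ w)) / (1 - F w) with hh
  -- ratio ℓ / b tends to x
  have hratio : Tendsto (fun w => ℓ w / b w) atTop (nhds x) := by
    by_cases hx : x = 0
    · subst hx
      simp only [hℓ, zero_mul, add_zero, Real.log_one, zero_div]
      exact tendsto_const_nhds
    · have hxb : Tendsto (fun w => x * b w) atTop (nhds 0) := by
        simpa using hb0.const_mul x
      have h1 : Tendsto (fun w => 1 + x * b w) atTop (𝓝[≠] (1:ℝ)) := by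
        rw [tendsto_nhdsWithin_iff]
        constructor
        · simpa using hxb.const_add 1
        · refine Eventually.of_forall fun w => ?_
          have hne : x * b w ≠ 0 := mul_ne_zero hx (hbpos w).ne'
          simp only [Set.mem_compl_iff, Set.mem_singleton_iff]
          intro hcontra
          exact hne (by linarith)
      have hd : HasDerivAt Real.log 1 1 := by
        simpa using Real.hasDerivAt_log one_ne_zero
      have hslope := hasDerivAt_iff_tendsto_slope.mp hd
      have h2 : Tendsto (fun w => Real.log (1 + x * b w) / (x * b w)) atTop (nhds 1) := by
        have hcomp := hslope.comp h1
        refine hcomp.congr fun w => ?_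
        simp [slope, Real.log_one]
        rw [div_eq_mul_inv, mul_inv]
        ring
      have h3 : Tendsto (fun w => x * (Real.log (1 + x * b w) / (x * b w))) atTop
          (nhds (x * 1)) := h2.const_mul x
      rw [mul_one] at h3
      refine h3.congr fun w => ?_
      rw [← mul_div_assoc, mul_div_mul_left _ _ hx]
  -- main limit for h
  have hH : Tendsto h atTop (nhds (Real.exp (-x))) := by
    rw [Metric.tendsto_nhds]
    intro δ hδ
    set ε : ℝ := min 1 ((δ/3) / Real.exp (1 - x)) with hε
    have hεpos : 0 < ε := lt_min one_pos (div_pos (by linarith) (Real.exp_pos _))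
    have hε1 : ε ≤ 1 := min_le_left _ _
    have hε2 : ε * Real.exp (1 - x) ≤ δ/3 := by
      have hmr := min_le_right 1 ((δ/3) / Real.exp (1 - x))
      calc ε * Real.exp (1 - x) ≤ ((δ/3) / Real.exp (1 - x)) * Real.exp (1 - x) :=
            mul_le_mul_of_nonneg_right hmr (Real.exp_pos _).le
        _ = δ/3 := by field_simp
    have hub : Real.exp (-(x - ε)) ≤ Real.exp (-x) + δ/3 := by
      have e1 : Real.exp (-(x-ε)) = Real.exp (-x) * Real.exp ε := by
        rw [← Real.exp_add]; ring_nf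
      have e2 : Real.exp (1 - x) = Real.exp (-x) * Real.exp 1 := by
        rw [← Real.exp_add]; ring_nf
      have e3 : Real.exp ε ≤ Real.exp 1 := Real.exp_le_exp.mpr hε1
      have e4 : (-ε) + 1 ≤ Real.exp (-ε) := Real.add_one_le_exp (-ε)
      have e5 : Real.exp ε * Real.exp (-ε) = 1 := by
        rw [← Real.exp_add]; simp
      have e6 : Real.exp ε - 1 ≤ ε * Real.exp ε := by nlinarith [Real.exp_pos ε]
      have e8 : ε * Real.exp ε ≤ ε * Real.exp 1 := mul_le_mul_of_nonneg_left e3 hεpos.le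
      nlinarith [mul_le_mul_of_nonneg_left (e6.trans e8) (Real.exp_pos (-x)).le, hε2,
        Real.exp_pos (-x)]
    have hlb : Real.exp (-x) - δ/3 ≤ Real.exp (-(x + ε)) := by
      have e1 : Real.exp (-(x+ε)) = Real.exp (-x) * Real.exp (-ε) := by
        rw [← Real.exp_add]; ring_nf
      have e2 : Real.exp (1 - x) = Real.exp (-x) * Real.exp 1 := by
        rw [← Real.exp_add]; ring_nf
      have e4 : (-ε) + 1 ≤ Real.exp (-ε) := Real.add_one_le_exp (-ε)
      have e7 : (1:ℝ) ≤ Real.exp 1 := by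
        have := Real.add_one_le_exp (1:ℝ); linarith
      have e8 : Real.exp (-x) ≤ Real.exp (1 - x) := Real.exp_le_exp.mpr (by linarith)
      nlinarith [mul_le_mul_of_nonneg_left e4 (Real.exp_pos (-x)).le,
        mul_le_mul_of_nonneg_right e8 hεpos.le, hε2, Real.exp_pos (-x)]
    have hEl : ∀ᶠ w in atTop, ℓ w / b w < x + ε :=
      hratio.eventually (eventually_lt_nhds (by linarith))
    have hEl' : ∀ᶠ w in atTop, x - ε < ℓ w / b w :=
      hratio.eventually (eventually_gt_nhds (by linarith))
    have hG1 : ∀ᶠ w in atTop,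
        dist ((1 - F (w + (x - ε) * b w)) / (1 - F w)) (Real.exp (-(x - ε))) < δ/3 := by
      have hg := hGumbel (x - ε)
      rw [Metric.tendsto_nhds] at hg
      exact hg (δ/3) (by linarith)
    have hG2 : ∀ᶠ w in atTop,
        dist ((1 - F (w + (x + ε) * b w)) / (1 - F w)) (Real.exp (-(x + ε))) < δ/3 := by
      have hg := hGumbel (x + ε)
      rw [Metric.tendsto_nhds] at hg
      exact hg (δ/3) (by linarith)
    filter_upwards [hEl, hEl', hG1, hG2] with w e1 e2 g1 g2
    have hbw := hbpos w
    have hl1 : ℓ w ≤ (x + ε) * b w := by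
      rw [div_lt_iff₀ hbw] at e1; linarith
    have hl2 : (x - ε) * b w ≤ ℓ w := by
      rw [lt_div_iff₀ hbw] at e2; linarith
    have hF1 : 1 - F (w + ℓ w) ≤ 1 - F (w + (x - ε) * b w) := by
      have := hFmono (show w + (x - ε) * b w ≤ w + ℓ w by linarith)
      linarith
    have hF2 : 1 - F (w + (x + ε) * b w) ≤ 1 - F (w + ℓ w) := by
      have := hFmono (show w + ℓ w ≤ w + (x + ε) * b w by linarith)
      linarith
    have hdenom := hFlt w
    have hq1 : h w ≤ (1 - F (w + (x - ε) * b w)) / (1 - F w) :=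
      (div_le_div_iff_of_pos_right hdenom).mpr hF1
    have hq2 : (1 - F (w + (x + ε) * b w)) / (1 - F w) ≤ h w :=
      (div_le_div_iff_of_pos_right hdenom).mpr hF2
    rw [Real.dist_eq] at g1 g2 ⊢
    rw [abs_lt] at g1 g2 ⊢
    constructor <;> [skip; skip]
    · linarith [g2.1, hlb]
    · linarith [g1.2, hub]
  -- transfer to original statement
  have hlogat : Tendsto Real.log atTop atTop := Real.tendsto_log_atTop
  have hxblog : Tendsto (fun u => x * b (Real.log u)) atTop (nhds 0) := by
    simpa using ((hb0.comp hlogat).const_mul x)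
  have hEc : ∀ᶠ u in atTop, 0 < 1 + x * b (Real.log u) := by
    have := hxblog.eventually (eventually_gt_nhds (show (-1:ℝ) < 0 by norm_num))
    filter_upwards [this] with u hu; linarith
  have hEu : ∀ᶠ u in atTop,
      (ℙ {ω | u + x * (u * b (Real.log u)) < Real.exp (R ω)}).toReal /
        (ℙ {ω | u < Real.exp (R ω)}).toReal = h (Real.log u) := by
    filter_upwards [hEc, eventually_gt_atTop (0:ℝ)] with u hc hu
    set c : ℝ := 1 + x * b (Real.log u) with hcdef
    have huc : 0 < u * c := mul_pos hu hc
    have hset1 : {ω | u < Real.exp (R ω)} = {ω | Real.log u < R ω} := by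
      ext ω; simp only [Set.mem_setOf_eq]
      exact (Real.log_lt_iff_lt_exp hu).symm
    have hset2 : {ω | u + x * (u * b (Real.log u)) < Real.exp (R ω)}
        = {ω | Real.log u + ℓ (Real.log u) < R ω} := by
      ext ω; simp only [Set.mem_setOf_eq]
      have harg : u + x * (u * b (Real.log u)) = u * c := by rw [hcdef]; ring
      rw [harg]
      have hlog : Real.log (u * c) = Real.log u + ℓ (Real.log u) := by
        rw [Real.log_mul hu.ne' hc.ne']
      rw [← hlog]
      exact (Real.log_lt_iff_lt_exp huc).symm
    rw [hset1, hset2, hForm, hForm]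
  have hcomp : Tendsto (fun u => h (Real.log u)) atTop (nhds (Real.exp (-x))) :=
    hH.comp hlogat
  exact hcomp.congr' (by filter_upwards [hEu] with u hu; exact hu.symm)
end

section
/- Let d ≥ 3 be an integer and q ∈ ℝ. Then ∫₀^∞ ∫₋₁¹ exp(q·v·√x)·e^{−x}·x^{(d−3)/2}·(1−v²)^{(d−4)/2} dv dx = √π · Γ((d−2)/2) · exp(q²/4). -/
open Real MeasureTheory

/-- For an integer `d ≥ 3` and `q ∈ ℝ`,
`∫₀^∞ ∫₋₁¹ exp(q v √x) e^{−x} x^{(d−3)/2} (1−v²)^{(d−4)/2} dv dx = √π Γ((d−2)/2) exp(q²/4)`. -/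
theorem double_integral_identity (d : ℕ) (hd : 3 ≤ d) (q : ℝ) :
    ∫ x in Set.Ioi (0 : ℝ), ∫ v in Set.Ioo (-1 : ℝ) 1,
        Real.exp (q * v * Real.sqrt x) * Real.exp (-x) * x ^ (((d : ℝ) - 3) / 2) *
          (1 - v ^ 2) ^ (((d : ℝ) - 4) / 2) =
      Real.sqrt π * Real.Gamma (((d : ℝ) - 2) / 2) * Real.exp (q ^ 2 / 4) := by
  have h3 : (3 : ℝ) ≤ (d : ℝ) := by exact_mod_cast hd
  set a : ℝ := ((d : ℝ) - 4) / 2 with ha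
  have ha1 : 0 < a + 1 := by rw [ha]; linarith
  have hGam : Real.Gamma (((d : ℝ) - 2) / 2) = Real.Gamma (a + 1) := by
    congr 1; rw [ha]; ring
  -- base Gamma integrand
  set φ : ℝ → ℝ := fun x => Real.exp (-x) * x ^ a with hφ
  have hφ_int : Integrable ((Set.Ioi (0 : ℝ)).indicator φ) := by
    refine IntegrableOn.integrable_indicator ?_ measurableSet_Ioi
    have := Real.GammaIntegral_convergent ha1
    simpa [hφ] using this
  have hφ_val : ∫ x, (Set.Ioi (0 : ℝ)).indicator φ x = Real.Gamma (a + 1) := by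
    rw [integral_indicator measurableSet_Ioi, Real.Gamma_eq_integral ha1]
    simp [hφ]
  -- shifted versions
  have hshift : ∀ K c : ℝ, ((Set.Ioi c).indicator fun x => K * (Real.exp (-x) * (x - c) ^ a))
      = fun x => (K * Real.exp (-c)) * (Set.Ioi (0 : ℝ)).indicator φ (x - c) := by
    intro K c
    funext x
    by_cases hx : c < x
    · rw [Set.indicator_of_mem (Set.mem_Ioi.2 hx),
        Set.indicator_of_mem (Set.mem_Ioi.2 (sub_pos.2 hx))]
      simp only [hφ]
      rw [show (-(x - c) : ℝ) = -x + c from by ring, Real.exp_add]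
      ring_nf
      rw [mul_assoc _ (rexp (-c)) (rexp c), ← Real.exp_add]
      simp
    · rw [Set.indicator_of_notMem (by simpa using hx),
        Set.indicator_of_notMem (by simp [Set.mem_Ioi]; linarith [not_lt.1 hx])]
      ring
  have hInt : ∀ K c : ℝ,
      Integrable ((Set.Ioi c).indicator fun x => K * (Real.exp (-x) * (x - c) ^ a)) := by
    intro K c
    rw [hshift K c]
    exact (hφ_int.comp_sub_right c).const_mul _
  have hVal : ∀ K c : ℝ,
      ∫ x, (Set.Ioi c).indicator (fun x => K * (Real.exp (-x) * (x - c) ^ a)) x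
        = K * Real.exp (-c) * Real.Gamma (a + 1) := by
    intro K c
    rw [hshift K c]
    rw [integral_const_mul, integral_sub_right_eq_self ((Set.Ioi (0:ℝ)).indicator φ) c, hφ_val]
  -- the product-space function
  set S : Set (ℝ × ℝ) := {p : ℝ × ℝ | p.2 ^ 2 < p.1} with hS
  have hS_meas : MeasurableSet S :=
    measurableSet_lt (by fun_prop) (by fun_prop)
  set F : ℝ × ℝ → ℝ :=
    S.indicator (fun p => Real.exp (q * p.2) * (Real.exp (-p.1) * (p.1 - p.2 ^ 2) ^ a)) with hF
  have hF_meas : Measurable F := by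
    refine Measurable.indicator ?_ hS_meas
    fun_prop
  -- slice in x at fixed u
  have hslice : ∀ u : ℝ, (fun x => F (x, u)) =
      (Set.Ioi (u ^ 2)).indicator fun x => Real.exp (q * u) * (Real.exp (-x) * (x - u ^ 2) ^ a) := by
    intro u
    funext x
    simp only [hF, hS, Set.indicator_apply, Set.mem_setOf_eq, Set.mem_Ioi]
  -- value of inner x-integral at fixed u
  have hIu : ∀ u : ℝ, ∫ x in Set.Ioi (0 : ℝ), F (x, u)
      = Real.exp (q * u) * Real.exp (-u ^ 2) * Real.Gamma (a + 1) := by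
    intro u
    have : ∫ x in Set.Ioi (0 : ℝ), F (x, u)
        = ∫ x, (Set.Ioi (0:ℝ)).indicator (fun x => F (x, u)) x := by
      rw [integral_indicator measurableSet_Ioi]
    rw [this, hslice u, Set.indicator_indicator, Set.Ioi_inter_Ioi,
      max_eq_right (sq_nonneg u), hVal]
  -- nonnegativity of F
  have hF_nonneg : ∀ p : ℝ × ℝ, 0 ≤ F p := by
    intro p
    refine Set.indicator_nonneg (fun p hp => ?_) p
    have h1 : (0:ℝ) ≤ p.1 - p.2 ^ 2 := by
      have := hp; simp only [hS, Set.mem_setOf_eq] at this; linarith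
    positivity
  -- integrability on the product
  have hF_int : Integrable F ((volume.restrict (Set.Ioi (0:ℝ))).prod volume) := by
    refine (integrable_prod_iff' hF_meas.aestronglyMeasurable).2 ⟨?_, ?_⟩
    · refine Filter.Eventually.of_forall fun u => ?_
      rw [hslice u]
      exact (hInt _ _).restrict
    · have hnorm : (fun u => ∫ x in Set.Ioi (0:ℝ), ‖F (x, u)‖)
          = fun u => Real.exp (q * u) * Real.exp (-u ^ 2) * Real.Gamma (a + 1) := by
        funext u
        rw [show (fun x => ‖F (x, u)‖) = fun x => F (x, u) from
          funext fun x => Real.norm_of_nonneg (hF_nonneg _), hIu u]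
      rw [hnorm]
      have hg : Integrable (fun u : ℝ => Real.exp (-(u - q / 2) ^ 2)) := by
        have : Integrable (fun u : ℝ => Real.exp (-u ^ 2)) := by
          simpa using integrable_exp_neg_mul_sq (one_pos)
        exact this.comp_sub_right (q / 2)
      have heq : (fun u : ℝ => Real.exp (q * u) * Real.exp (-u ^ 2) * Real.Gamma (a + 1))
          = fun u => (Real.Gamma (a + 1) * Real.exp (q ^ 2 / 4)) * Real.exp (-(u - q / 2) ^ 2) := by
        funext u
        rw [← Real.exp_add, mul_comm, mul_assoc, ← Real.exp_add]
        ring_nf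
      rw [heq]
      exact hg.const_mul _
  -- step A: rewrite inner v-integral
  have hinner : ∀ x ∈ Set.Ioi (0 : ℝ),
      (∫ v in Set.Ioo (-1 : ℝ) 1,
        Real.exp (q * v * Real.sqrt x) * Real.exp (-x) * x ^ (((d : ℝ) - 3) / 2) *
          (1 - v ^ 2) ^ a) = ∫ u, F (x, u) := by
    intro x hx
    rw [Set.mem_Ioi] at hx
    set s : ℝ := Real.sqrt x with hs
    have hs_pos : 0 < s := Real.sqrt_pos.2 hx
    set g : ℝ → ℝ := fun u => Real.exp (q * u) * (Real.exp (-x) * (x - u ^ 2) ^ a) with hg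
    have hFslice : (fun u => F (x, u)) = Set.indicator {u : ℝ | u ^ 2 < x} g := by
      funext u
      simp only [hF, hS, hg, Set.indicator_apply, Set.mem_setOf_eq]
    have hset : {u : ℝ | u ^ 2 < x} = Set.Ioo (-s) s := by
      ext u
      simp only [Set.mem_setOf_eq, Set.mem_Ioo]
      constructor
      · intro h
        have : |u| < s := by
          rw [hs]; exact (Real.lt_sqrt (abs_nonneg u)).2 (by rwa [sq_abs])
        exact abs_lt.1 this
      · intro h
        have : |u| < s := abs_lt.2 h
        have := (Real.lt_sqrt (abs_nonneg u)).1 (by rwa [← hs])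
        rwa [sq_abs] at this
    have hmeas : MeasurableSet {u : ℝ | u ^ 2 < x} := by rw [hset]; exact measurableSet_Ioo
    rw [hFslice, integral_indicator hmeas, hset]
    -- now : LHS = ∫ u in Ioo (-s) s, g u
    have h1 : ∫ u in Set.Ioo (-s) s, g u = ∫ u in (-s)..s, g u := by
      rw [intervalIntegral.integral_of_le (by linarith), integral_Ioc_eq_integral_Ioo]
    have h2 : ∫ u in (-s)..s, g u = s • ∫ v in (-1 : ℝ)..1, g (s * v) := by
      rw [intervalIntegral.smul_integral_comp_mul_left g s]
      norm_num
    have h3' : s • ∫ v in (-1 : ℝ)..1, g (s * v) = ∫ v in Set.Ioo (-1 : ℝ) 1, s * g (s * v) := by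
      rw [intervalIntegral.integral_of_le (by norm_num), integral_Ioc_eq_integral_Ioo,
        smul_eq_mul, ← integral_const_mul]
    rw [h1, h2, h3']
    refine setIntegral_congr_fun measurableSet_Ioo fun v hv => ?_
    obtain ⟨hv1, hv2⟩ := hv
    have hv2' : (0:ℝ) ≤ 1 - v ^ 2 := by nlinarith
    have hsv : (s * v) ^ 2 = x * v ^ 2 := by
      rw [mul_pow, hs, Real.sq_sqrt hx.le]
    have hx1 : x - (s * v) ^ 2 = x * (1 - v ^ 2) := by rw [hsv]; ring
    have hx2 : (x * (1 - v ^ 2)) ^ a = x ^ a * (1 - v ^ 2) ^ a :=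
      Real.mul_rpow hx.le hv2'
    have hx3 : x ^ (((d : ℝ) - 3) / 2) = s * x ^ a := by
      rw [hs, Real.sqrt_eq_rpow, ← Real.rpow_add hx]
      congr 1
      rw [ha]; ring
    simp only [hg]
    rw [hx1, hx2, hx3]
    rw [show q * (s * v) = q * v * s by ring]
    ring
  -- assemble
  calc
    ∫ x in Set.Ioi (0 : ℝ), ∫ v in Set.Ioo (-1 : ℝ) 1,
        Real.exp (q * v * Real.sqrt x) * Real.exp (-x) * x ^ (((d : ℝ) - 3) / 2) *
          (1 - v ^ 2) ^ (((d : ℝ) - 4) / 2)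
        = ∫ x in Set.Ioi (0 : ℝ), ∫ u, F (x, u) :=
      setIntegral_congr_fun measurableSet_Ioi fun x hx => hinner x hx
    _ = ∫ u, ∫ x in Set.Ioi (0 : ℝ), F (x, u) := by
      exact integral_integral_swap hF_int
    _ = ∫ u, Real.exp (q * u) * Real.exp (-u ^ 2) * Real.Gamma (a + 1) := by
      exact integral_congr_ae (Filter.Eventually.of_forall fun u => hIu u)
    _ = Real.sqrt π * Real.Gamma (((d : ℝ) - 2) / 2) * Real.exp (q ^ 2 / 4) := by
      have heq : (fun u : ℝ => Real.exp (q * u) * Real.exp (-u ^ 2) * Real.Gamma (a + 1))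
          = fun u => (Real.Gamma (a + 1) * Real.exp (q ^ 2 / 4)) * Real.exp (-(u - q / 2) ^ 2) := by
        funext u
        rw [← Real.exp_add, mul_comm, mul_assoc, ← Real.exp_add]
        ring_nf
      rw [heq, integral_const_mul, integral_sub_right_eq_self (fun u : ℝ => Real.exp (-u ^ 2)) (q/2)]
      have hgauss : ∫ u : ℝ, Real.exp (-u ^ 2) = Real.sqrt π := by
        have := integral_gaussian (1 : ℝ)
        simpa using this
      rw [hgauss, hGam]
      ring
end

section
/- Let R be a positive random variable such that the distribution function of e^R is in the Gumbel max-domain of attraction with positive scaling function e(·), and assume lim_{u→∞} e(u)·log(u)/u = c₀ for some c₀ ∈ [0,∞). Then for every m > 0 and every c₁ > 0 there exists k > 0 such that, with a(u) = 1 − k/log u, lim_{u→∞} u^m · P(e^R > (u/c₁)^{1/a(u)})/P(e^R > u) = 0. -/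
open MeasureTheory ProbabilityTheory Filter Real

/-- Auxiliary iterated sequence: repeatedly add the scaling function. -/
noncomputable def iterSeq (e : ℝ → ℝ) (u : ℝ) : ℕ → ℝ
  | 0 => u
  | n + 1 => iterSeq e u n + e (iterSeq e u n)

set_option maxHeartbeats 1000000 in
/-- If the distribution function of `e^R` is in the Gumbel max-domain of
attraction with scaling function `e(·)` and `e(u) log u / u → c₀ ∈ [0,∞)`, then for every
`m > 0` and `c₁ > 0` there exists `k > 0` such that, with `a(u) = 1 − k/log u`,
`u^m P(e^R > (u/c₁)^{1/a(u)})/P(e^R > u) → 0`. -/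
theorem negligible_tail
    {Ω : Type*} [MeasureSpace Ω] [IsProbabilityMeasure (ℙ : Measure Ω)]
    (R : Ω → ℝ) (hRmeas : Measurable R) (hRpos : ∀ ω, 0 < R ω)
    (hRtail : ∀ u : ℝ, 0 < ℙ {ω | u < Real.exp (R ω)})
    (e : ℝ → ℝ) (hepos : ∀ u : ℝ, 0 < e u)
    (hGumbel : ∀ x : ℝ, Tendsto
      (fun u => (ℙ {ω | u + x * e u < Real.exp (R ω)}).toReal /
        (ℙ {ω | u < Real.exp (R ω)}).toReal) atTop (nhds (Real.exp (-x))))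
    (c₀ : ℝ) (hc₀ : 0 ≤ c₀)
    (he : Tendsto (fun u => e u * Real.log u / u) atTop (nhds c₀))
    (m c₁ : ℝ) (hm : 0 < m) (hc₁ : 0 < c₁) :
    ∃ k > (0 : ℝ),
      Tendsto (fun u => u ^ m *
          ((ℙ {ω | (u / c₁) ^ (1 / (1 - k / Real.log u)) < Real.exp (R ω)}).toReal /
            (ℙ {ω | u < Real.exp (R ω)}).toReal))
        atTop (nhds 0) := by
  set Fb : ℝ → ℝ := fun t => (ℙ {ω | t < Real.exp (R ω)}).toReal with hFb
  have hFbpos : ∀ t, 0 < Fb t := fun t =>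
    ENNReal.toReal_pos (hRtail t).ne' (measure_ne_top _ _)
  have hFbanti : ∀ ⦃a b : ℝ⦄, a ≤ b → Fb b ≤ Fb a := by
    intro a b hab
    exact ENNReal.toReal_mono (measure_ne_top _ _)
      (measure_mono fun ω hω => lt_of_le_of_lt hab hω)
  -- one-step halving bound, eventually
  have hexp1 : (2 : ℝ) < Real.exp 1 := by
    have := Real.exp_one_gt_d9; linarith
  have hehalf : Real.exp (-1 : ℝ) < 1 / 2 := by
    rw [Real.exp_neg]
    have h1 : Real.exp 1 * (Real.exp 1)⁻¹ = 1 := mul_inv_cancel₀ (Real.exp_pos 1).ne'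
    nlinarith [Real.exp_pos 1, inv_pos.mpr (Real.exp_pos 1)]
  have hstep0 : ∀ᶠ u in atTop, Fb (u + e u) / Fb u < 1 / 2 := by
    have := (hGumbel 1).eventually (Iio_mem_nhds hehalf)
    filter_upwards [this] with u hu
    simpa using hu
  obtain ⟨U₀, hU₀⟩ := eventually_atTop.mp hstep0
  have hstep : ∀ t, U₀ ≤ t → Fb (t + e t) ≤ (1 / 2) * Fb t := by
    intro t ht
    have := hU₀ t ht
    have := (div_lt_iff₀ (hFbpos t)).mp this
    linarith
  -- growth bound for e, eventually
  have hegrow0 : ∀ᶠ u in atTop, e u * Real.log u / u < c₀ + 1 :=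
    he.eventually (Iio_mem_nhds (by linarith))
  obtain ⟨U₁, hU₁⟩ := eventually_atTop.mp hegrow0
  -- constants
  have hlog2 : (0 : ℝ) < Real.log 2 := Real.log_pos (by norm_num)
  set A : ℝ := (m + 1) / Real.log 2 with hA
  have hApos : 0 < A := div_pos (by linarith) hlog2
  set logC : ℝ := (A + 1) * (c₀ + 1) with hlogC
  have hlogCpos : 0 < logC := by positivity
  refine ⟨max 1 (Real.log c₁ + logC + 1), lt_of_lt_of_le one_pos (le_max_left _ _), ?_⟩
  set k : ℝ := max 1 (Real.log c₁ + logC + 1) with hk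
  have hk1 : (1 : ℝ) ≤ k := le_max_left _ _
  have hk2 : Real.log c₁ + logC + 1 ≤ k := le_max_right _ _
  -- iterated halving
  have key : ∀ u, U₀ ≤ u → ∀ n, Fb (iterSeq e u n) ≤ (1 / 2) ^ n * Fb u := by
    intro u hu n
    induction n with
    | zero => simp [iterSeq]
    | succ n ih =>
      have hge : u ≤ iterSeq e u n := by
        clear ih
        induction n with
        | zero => simp [iterSeq]
        | succ n ih => have := hepos (iterSeq e u n); simp [iterSeq]; linarith
      have h1 : Fb (iterSeq e u (n + 1)) ≤ (1 / 2) * Fb (iterSeq e u n) := by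
        have := hstep (iterSeq e u n) (le_trans hu hge)
        simpa [iterSeq] using this
      calc Fb (iterSeq e u (n + 1)) ≤ (1 / 2) * Fb (iterSeq e u n) := h1
        _ ≤ (1 / 2) * ((1 / 2) ^ n * Fb u) :=
            mul_le_mul_of_nonneg_left ih (by norm_num)
        _ = (1 / 2) ^ (n + 1) * Fb u := by ring
  have seq_ge : ∀ u n, u ≤ iterSeq e u n := by
    intro u n
    induction n with
    | zero => simp [iterSeq]
    | succ n ih => have := hepos (iterSeq e u n); simp [iterSeq]; linarith
  -- growth bound on the iterated sequence
  have grow : ∀ u, U₁ ≤ u → Real.exp 1 ≤ u → ∀ n,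
      iterSeq e u n ≤ u * Real.exp (n * ((c₀ + 1) / Real.log u)) := by
    intro u hu1 hue n
    have hu0 : 0 < u := lt_of_lt_of_le (Real.exp_pos 1) hue
    have hL1 : 1 ≤ Real.log u := by
      rw [Real.le_log_iff_exp_le hu0]; simpa using hue
    induction n with
    | zero => simp [iterSeq]
    | succ n ih =>
      set s : ℝ := iterSeq e u n with hs
      have hus : u ≤ s := seq_ge u n
      have hs0 : 0 < s := lt_of_lt_of_le hu0 hus
      have hlogs : Real.log u ≤ Real.log s := Real.log_le_log hu0 hus
      have hlogs1 : (0 : ℝ) < Real.log s := by linarith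
      have he1 : e s * Real.log s / s < c₀ + 1 := hU₁ s (le_trans hu1 hus)
      have he2 : e s * Real.log s < (c₀ + 1) * s := by
        have := (div_lt_iff₀ hs0).mp he1; linarith
      have he3 : e s ≤ (c₀ + 1) * s / Real.log s := by
        rw [le_div_iff₀ hlogs1]; linarith
      have he4 : (c₀ + 1) * s / Real.log s ≤ (c₀ + 1) * s / Real.log u := by
        gcongr
      set d : ℝ := (c₀ + 1) / Real.log u with hd
      have hd0 : 0 ≤ d := by positivity
      have hse : s + e s ≤ s * (1 + d) := by
        have : (c₀ + 1) * s / Real.log u = s * d := by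
          rw [hd]; ring
        nlinarith [he3, he4]
      have hexpd : 1 + d ≤ Real.exp d := by
        have := Real.add_one_le_exp d; linarith
      calc iterSeq e u (n + 1) = s + e s := by rw [iterSeq]
        _ ≤ s * (1 + d) := hse
        _ ≤ s * Real.exp d := mul_le_mul_of_nonneg_left hexpd hs0.le
        _ ≤ (u * Real.exp ((n : ℕ) * d)) * Real.exp d :=
            mul_le_mul_of_nonneg_right ih (Real.exp_pos d).le
        _ = u * Real.exp ((n + 1 : ℕ) * d) := by
            rw [mul_assoc, ← Real.exp_add, Nat.cast_succ, add_mul, one_mul]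
  -- main estimate
  have hbound : ∀ᶠ u in atTop,
      0 ≤ u ^ m * (Fb ((u / c₁) ^ (1 / (1 - k / Real.log u))) / Fb u) ∧
      u ^ m * (Fb ((u / c₁) ^ (1 / (1 - k / Real.log u))) / Fb u) ≤ u⁻¹ := by
    filter_upwards [eventually_ge_atTop U₀, eventually_ge_atTop U₁,
      eventually_ge_atTop (Real.exp 1), eventually_gt_atTop (Real.exp k)] with
      u hu0' hu1' hue huk
    have hu0 : 0 < u := lt_of_lt_of_le (Real.exp_pos 1) hue
    set L : ℝ := Real.log u with hL
    have hL1 : 1 ≤ L := by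
      rw [hL, Real.le_log_iff_exp_le hu0]; simpa using hue
    have hLk : k < L := by
      rw [hL, Real.lt_log_iff_exp_lt hu0]; exact huk
    set n : ℕ := ⌈A * L⌉₊ with hn
    have hn_ge : A * L ≤ (n : ℝ) := Nat.le_ceil _
    have hn_le : (n : ℝ) ≤ A * L + 1 := by
      have := Nat.ceil_lt_add_one (by positivity : (0:ℝ) ≤ A * L)
      linarith
    -- sequence bounded by u * exp logC
    have hseqle : iterSeq e u n ≤ u * Real.exp logC := by
      have h1 := grow u hu1' hue n
      have h2 : (n : ℝ) * ((c₀ + 1) / L) ≤ logC := by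
        rw [hlogC]
        have hLpos : (0 : ℝ) < L := by linarith
        rw [mul_div_assoc'] at *
        rw [div_le_iff₀ hLpos]
        nlinarith [hn_le, hLpos]
      calc iterSeq e u n ≤ u * Real.exp ((n : ℝ) * ((c₀ + 1) / L)) := h1
        _ ≤ u * Real.exp logC := by
            have := Real.exp_le_exp.mpr h2; nlinarith [hu0]
    -- the rpow point dominates u * exp logC
    have hpoint : u * Real.exp logC ≤ (u / c₁) ^ (1 / (1 - k / L)) := by
      have huc : 0 < u / c₁ := div_pos hu0 hc₁
      rw [Real.rpow_def_of_pos huc, Real.log_div hu0.ne' hc₁.ne']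
      have hul : u = Real.exp L := (Real.exp_log hu0).symm
      have hLk0 : (0 : ℝ) < L - k := by linarith
      have hLpos : (0 : ℝ) < L := by linarith
      have h1 : (1 : ℝ) - k / L = (L - k) / L := by field_simp
      have h2 : L + logC ≤ (L - Real.log c₁) * (1 / (1 - k / L)) := by
        rw [h1, one_div, inv_div, ← mul_div_assoc]
        rw [le_div_iff₀ hLk0]
        have e1 : L * 1 ≤ L * (k - logC - Real.log c₁) := by
          apply mul_le_mul_of_nonneg_left _ hLpos.le
          linarith
        have e2 : 0 ≤ k * logC := mul_nonneg (by linarith) hlogCpos.le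
        nlinarith [e1, e2]
      calc u * Real.exp logC = Real.exp (L + logC) := by
            rw [Real.exp_add, ← hul]
        _ ≤ Real.exp ((L - Real.log c₁) * (1 / (1 - k / L))) := Real.exp_le_exp.mpr h2
    -- combine
    have hFbpt : Fb ((u / c₁) ^ (1 / (1 - k / L))) ≤ (1 / 2) ^ n * Fb u :=
      le_trans (hFbanti (le_trans hseqle hpoint)) (key u hu0' n)
    have hdivle : Fb ((u / c₁) ^ (1 / (1 - k / L))) / Fb u ≤ (1 / 2) ^ n := by
      rw [div_le_iff₀ (hFbpos u)]; exact hFbpt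
    have hdivnn : 0 ≤ Fb ((u / c₁) ^ (1 / (1 - k / L))) / Fb u :=
      div_nonneg ENNReal.toReal_nonneg (hFbpos u).le
    have hum : (0 : ℝ) ≤ u ^ m := Real.rpow_nonneg hu0.le m
    constructor
    · exact mul_nonneg hum hdivnn
    · have h3 : u ^ m * (Fb ((u / c₁) ^ (1 / (1 - k / L))) / Fb u)
          ≤ u ^ m * (1 / 2) ^ n := mul_le_mul_of_nonneg_left hdivle hum
      have h4 : ((1 : ℝ) / 2) ^ n = Real.exp (-(n * Real.log 2)) := by
        rw [show ((1:ℝ)/2) = Real.exp (-(Real.log 2)) by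
          rw [Real.exp_neg, Real.exp_log (by norm_num : (0:ℝ) < 2)]; norm_num]
        rw [← Real.exp_nat_mul]
        congr 1
        ring
      have h5 : (m + 1) * L ≤ (n : ℝ) * Real.log 2 := by
        have h := mul_le_mul_of_nonneg_right hn_ge hlog2.le
        have hAl : A * Real.log 2 = m + 1 := div_mul_cancel₀ _ hlog2.ne'
        have heq : (m + 1) * L = A * L * Real.log 2 := by rw [← hAl]; ring
        linarith
      have h6 : u ^ m * (1 / 2) ^ n ≤ u⁻¹ := by
        rw [h4, Real.rpow_def_of_pos hu0, ← Real.exp_add]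
        have h7 : u⁻¹ = Real.exp (-L) := by
          rw [Real.exp_neg, Real.exp_log hu0]
        rw [h7]
        apply Real.exp_le_exp.mpr
        have hlu : Real.log u = L := rfl
        nlinarith [h5]
      linarith
  -- squeeze
  have hnn : ∀ᶠ u in atTop,
      0 ≤ u ^ m * (Fb ((u / c₁) ^ (1 / (1 - k / Real.log u))) / Fb u) :=
    hbound.mono fun u h => h.1
  have hle : ∀ᶠ u in atTop,
      u ^ m * (Fb ((u / c₁) ^ (1 / (1 - k / Real.log u))) / Fb u) ≤ u⁻¹ :=
    hbound.mono fun u h => h.2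
  exact squeeze_zero' hnn hle tendsto_inv_atTop_zero
end
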